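/- Fix c > 0, n, d ∈ ℕ and positive reals s_{1j}, s_{2j} for j = 1,…,d, and let β = Γ(3/c)/Γ(1/c). The system of equations −n/(σ_{lj}+σ_{rj}) + c·β^{c/2}·σ_{lj}^{−c−1}·s_{1j} = 0 and −n/(σ_{lj}+σ_{rj}) + c·β^{c/2}·σ_{rj}^{−c−1}·s_{2j} = 0 in positive unknowns σ_{lj}, σ_{rj} has the unique positive solution σ̂_{lj}^c = (c/n)·β^{c/2}·s_{1j}^{c/(c+1)}·(s_{1j}^{1/(c+1)} + s_{2j}^{1/(c+1)}) and σ̂_{rj}^c = (c/n)·β^{c/2}·s_{2j}^{c/(c+1)}·(s_{1j}^{1/(c+1)} + s_{2j}^{1/(c+1)}). -/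

import Mathlib

open Real

private lemma sgg_ident (c a b : ℝ) (hc : 0 < c) (ha : 0 < a) (hb : 0 < b) :
    a * (1 + (b / a) ^ (1 / (c + 1))) =
      a ^ (c / (c + 1)) * (a ^ (1 / (c + 1)) + b ^ (1 / (c + 1))) := by
  have hc1 : (0:ℝ) < c + 1 := by linarith
  have hap : (0:ℝ) < a ^ (1 / (c + 1)) := rpow_pos_of_pos ha _
  have hea : a ^ (c / (c + 1)) * a ^ (1 / (c + 1)) = a := by
    rw [← rpow_add ha, show c / (c + 1) + 1 / (c + 1) = 1 by field_simp]
    exact rpow_one a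
  rw [div_rpow hb.le ha.le]
  field_simp
  linear_combination -hea

private lemma sgg_poly (n c B s X Y : ℝ) (hc : 0 < c) (hn : 0 < n) (hB : 0 < B)
    (hs : 0 < s) (hX : 0 < X) (hY : 0 < Y) :
    (-n / (X + Y) + c * B * X ^ (-c - 1) * s = 0) ↔
      n * (X ^ c * X) = c * B * s * (X + Y) := by
  have hXY : 0 < X + Y := by linarith
  have hXc : 0 < X ^ c := rpow_pos_of_pos hX _
  have hneg : X ^ (-c - 1) = (X ^ c * X)⁻¹ := by
    rw [show (-c - 1 : ℝ) = -(c + 1) by ring, rpow_neg hX.le, rpow_add hX, rpow_one]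
  rw [hneg]
  constructor
  · intro h
    field_simp at h
    linarith
  · intro h
    field_simp
    linarith

private lemma sgg_exist (n c B a b Sl Sr : ℝ) (hn : 0 < n) (hc : 0 < c) (hB : 0 < B)
    (ha : 0 < a) (hb : 0 < b)
    (hSl : Sl = c / n * B * a ^ (c / (c + 1)) * (a ^ (1 / (c + 1)) + b ^ (1 / (c + 1))))
    (hSr : Sr = c / n * B * b ^ (c / (c + 1)) * (a ^ (1 / (c + 1)) + b ^ (1 / (c + 1)))) :
    n * ((Sl ^ (1 / c)) ^ c * Sl ^ (1 / c)) = c * B * a * (Sl ^ (1 / c) + Sr ^ (1 / c)) := by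
  have hc1 : (0:ℝ) < c + 1 := by linarith
  have hT : (0:ℝ) < a ^ (1 / (c + 1)) + b ^ (1 / (c + 1)) :=
    add_pos (rpow_pos_of_pos ha _) (rpow_pos_of_pos hb _)
  have hSlpos : 0 < Sl := by
    rw [hSl]
    exact mul_pos (mul_pos (mul_pos (div_pos hc hn) hB) (rpow_pos_of_pos ha _)) hT
  have hba : (0:ℝ) < b / a := div_pos hb ha
  have hXc : (Sl ^ (1 / c)) ^ c = Sl := by
    rw [← Real.rpow_mul hSlpos.le, one_div, inv_mul_cancel₀ hc.ne', rpow_one]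
  have hSr2 : Sr = (b / a) ^ (c / (c + 1)) * Sl := by
    rw [hSl, hSr, div_rpow hb.le ha.le]
    field_simp
  have hY : Sr ^ (1 / c) = (b / a) ^ (1 / (c + 1)) * Sl ^ (1 / c) := by
    rw [hSr2, mul_rpow (rpow_nonneg hba.le _) hSlpos.le, ← Real.rpow_mul hba.le,
      show c / (c + 1) * (1 / c) = 1 / (c + 1) by field_simp]
  rw [hXc, hY]
  have hid := sgg_ident c a b hc ha hb
  have hnSl : n * Sl = c * B * (a ^ (c / (c + 1)) * (a ^ (1 / (c + 1)) + b ^ (1 / (c + 1)))) := by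
    rw [hSl]; field_simp
  linear_combination Sl ^ (1 / c) * hnSl - c * B * Sl ^ (1 / c) * hid

private lemma sgg_uniq (n c B a b Sl σl σr : ℝ) (hn : 0 < n) (hc : 0 < c) (hB : 0 < B)
    (ha : 0 < a) (hb : 0 < b) (hσl : 0 < σl) (hσr : 0 < σr)
    (hSl : Sl = c / n * B * a ^ (c / (c + 1)) * (a ^ (1 / (c + 1)) + b ^ (1 / (c + 1))))
    (H1 : n * (σl ^ c * σl) = c * B * a * (σl + σr))
    (H2 : n * (σr ^ c * σr) = c * B * b * (σl + σr)) :
    σl ^ c = Sl := by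
  have hc1 : (0:ℝ) < c + 1 := by linarith
  have hba : (0:ℝ) < b / a := div_pos hb ha
  have hq : (0:ℝ) < (b / a) ^ (1 / (c + 1)) := rpow_pos_of_pos hba _
  have hpow : ∀ x : ℝ, 0 < x → x ^ (c + 1) = x ^ c * x := by
    intro x hx
    rw [rpow_add hx, rpow_one]
  have key : a * (σr ^ c * σr) = b * (σl ^ c * σl) := by
    have e : n * (a * (σr ^ c * σr)) = n * (b * (σl ^ c * σl)) := by
      linear_combination a * H2 - b * H1
    exact mul_left_cancel₀ hn.ne' e
  have h7 : σr ^ (c + 1) = ((b / a) ^ (1 / (c + 1)) * σl) ^ (c + 1) := by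
    rw [mul_rpow hq.le hσl.le, ← Real.rpow_mul hba.le,
      show 1 / (c + 1) * (c + 1) = 1 by field_simp, rpow_one,
      hpow σr hσr, hpow σl hσl]
    field_simp
    linear_combination key
  have hσr_eq : σr = (b / a) ^ (1 / (c + 1)) * σl := by
    have h8 : (σr ^ (c + 1)) ^ ((c + 1)⁻¹) =
        (((b / a) ^ (1 / (c + 1)) * σl) ^ (c + 1)) ^ ((c + 1)⁻¹) := by rw [h7]
    rwa [← Real.rpow_mul hσr.le, ← Real.rpow_mul (by positivity),
      mul_inv_cancel₀ hc1.ne', rpow_one, rpow_one] at h8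
  have hid := sgg_ident c a b hc ha hb
  have hnSl : n * Sl = c * B * (a ^ (c / (c + 1)) * (a ^ (1 / (c + 1)) + b ^ (1 / (c + 1))))
      := by rw [hSl]; field_simp
  have h9 : (n * σl ^ c) * σl = (n * Sl) * σl := by
    rw [hnSl, ← hid]
    linear_combination H1 + c * B * a * hσr_eq
  have h10 := mul_right_cancel₀ hσl.ne' h9
  exact mul_left_cancel₀ hn.ne' h10

theorem sgg_scale_mle_unique (n d : ℕ) (hn : 0 < n) (c : ℝ) (hc : 0 < c)
    (s1 s2 : Fin d → ℝ) (hs1 : ∀ j, 0 < s1 j) (hs2 : ∀ j, 0 < s2 j)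
    (β : ℝ) (hβ : β = Real.Gamma (3 / c) / Real.Gamma (1 / c)) (j : Fin d)
    (Sl Sr : ℝ)
    (hSl : Sl = (c / n) * β ^ (c / 2) * s1 j ^ (c / (c + 1)) *
        (s1 j ^ (1 / (c + 1)) + s2 j ^ (1 / (c + 1))))
    (hSr : Sr = (c / n) * β ^ (c / 2) * s2 j ^ (c / (c + 1)) *
        (s1 j ^ (1 / (c + 1)) + s2 j ^ (1 / (c + 1)))) :
    (-(n : ℝ) / (Sl ^ (1 / c) + Sr ^ (1 / c))
        + c * β ^ (c / 2) * (Sl ^ (1 / c)) ^ (-c - 1) * s1 j = 0 ∧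
      -(n : ℝ) / (Sl ^ (1 / c) + Sr ^ (1 / c))
        + c * β ^ (c / 2) * (Sr ^ (1 / c)) ^ (-c - 1) * s2 j = 0) ∧
    (∀ σl σr : ℝ, 0 < σl → 0 < σr →
      (-(n : ℝ) / (σl + σr) + c * β ^ (c / 2) * σl ^ (-c - 1) * s1 j = 0) →
      (-(n : ℝ) / (σl + σr) + c * β ^ (c / 2) * σr ^ (-c - 1) * s2 j = 0) →
      σl ^ c = Sl ∧ σr ^ c = Sr) := by
  have hnpos : (0:ℝ) < (n:ℝ) := by exact_mod_cast hn
  have hβpos : 0 < β := by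
    rw [hβ]
    exact div_pos (Real.Gamma_pos_of_pos (by positivity)) (Real.Gamma_pos_of_pos (by positivity))
  have hB : 0 < β ^ (c / 2) := rpow_pos_of_pos hβpos _
  have ha := hs1 j
  have hb := hs2 j
  have hT : (0:ℝ) < s1 j ^ (1 / (c + 1)) + s2 j ^ (1 / (c + 1)) :=
    add_pos (rpow_pos_of_pos ha _) (rpow_pos_of_pos hb _)
  have hSlpos : 0 < Sl := by
    rw [hSl]
    exact mul_pos (mul_pos (mul_pos (div_pos hc hnpos) hB) (rpow_pos_of_pos ha _)) hT
  have hSrpos : 0 < Sr := by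
    rw [hSr]
    exact mul_pos (mul_pos (mul_pos (div_pos hc hnpos) hB) (rpow_pos_of_pos hb _)) hT
  have hX : 0 < Sl ^ (1 / c) := rpow_pos_of_pos hSlpos _
  have hY : 0 < Sr ^ (1 / c) := rpow_pos_of_pos hSrpos _
  have hSr' : Sr = c / (n:ℝ) * β ^ (c / 2) * s2 j ^ (c / (c + 1)) *
      (s2 j ^ (1 / (c + 1)) + s1 j ^ (1 / (c + 1))) := by rw [hSr]; ring
  have hSl' : Sl = c / (n:ℝ) * β ^ (c / 2) * s1 j ^ (c / (c + 1)) *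
      (s2 j ^ (1 / (c + 1)) + s1 j ^ (1 / (c + 1))) := by rw [hSl]; ring
  refine ⟨⟨?_, ?_⟩, ?_⟩
  · exact (sgg_poly (n:ℝ) c (β ^ (c / 2)) (s1 j) (Sl ^ (1 / c)) (Sr ^ (1 / c)) hc hnpos hB
      ha hX hY).mpr
      (sgg_exist (n:ℝ) c (β ^ (c / 2)) (s1 j) (s2 j) Sl Sr hnpos hc hB ha hb hSl hSr)
  · have h := (sgg_poly (n:ℝ) c (β ^ (c / 2)) (s2 j) (Sr ^ (1 / c)) (Sl ^ (1 / c)) hc hnpos hB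
      hb hY hX).mpr
      (sgg_exist (n:ℝ) c (β ^ (c / 2)) (s2 j) (s1 j) Sr Sl hnpos hc hB hb ha hSr' hSl')
    rw [add_comm (Sl ^ (1 / c))]
    exact h
  · intro σl σr hl hr h1 h2
    have H1 := (sgg_poly (n:ℝ) c (β ^ (c / 2)) (s1 j) σl σr hc hnpos hB ha hl hr).mp h1
    rw [add_comm σl σr] at h2
    have H2 := (sgg_poly (n:ℝ) c (β ^ (c / 2)) (s2 j) σr σl hc hnpos hB hb hr hl).mp h2
    have H2' : (n:ℝ) * (σr ^ c * σr) = c * β ^ (c / 2) * s2 j * (σl + σr) := by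
      rw [add_comm σl σr]; exact H2
    have H1' : (n:ℝ) * (σl ^ c * σl) = c * β ^ (c / 2) * s1 j * (σr + σl) := by
      rw [add_comm σr σl]; exact H1
    exact ⟨sgg_uniq (n:ℝ) c (β ^ (c / 2)) (s1 j) (s2 j) Sl σl σr hnpos hc hB ha hb hl hr
        hSl H1 H2',
      sgg_uniq (n:ℝ) c (β ^ (c / 2)) (s2 j) (s1 j) Sr σr σl hnpos hc hB hb ha hr hl
        hSr' H2 H1'⟩
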